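/- arXiv:2005.09089 — 2 statements merged into one kernel-verified Lean document; each statement's English description precedes it below -/
import Mathlib

section
/- Let e be a Boolean Dice expression with free variables x1,...,xn and suppose e compiles as e ⤳ (φ, γ, w). Then for any Boolean values v1,...,vn and any Boolean value v, the unnormalized semantics satisfies ⟦e[xi ↦ vi]⟧(v) = WMC(((φ ⇔ v) ∧ γ)[xi ↦ vi], w). -/
/-! The Boolean fragment of the Dice language, its unnormalized denotational
semantics, its compilation to weighted Boolean formulas, and the correctness
statement relating the two via weighted model counting. -/

/-- Atomic expressions: Boolean constants and variables. -/
inductive AExp : Type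
  | const : Bool → AExp
  | var : String → AExp

/-- Boolean Dice expressions:
`e ::= true | false | x | flip θ | observe a | if a then e1 else e2 | let x = e1 in e2`. -/
inductive BExp : Type
  | atom : AExp → BExp
  | flip : ℝ → BExp
  | obs : AExp → BExp
  | ite : AExp → BExp → BExp → BExp
  | letin : String → BExp → BExp → BExp

/-- Substitution of Boolean values for free variables in an atomic expression
(`ρ x = some b` means `x` is replaced by the constant `b`). -/
def AExp.substEnv (ρ : String → Option Bool) : AExp → AExp
  | .const b => .const b
  | .var x => match ρ x with
      | some b => .const b
      | none => .var x

/-- Capture-avoiding substitution of Boolean values for free variables: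
`e[xi ↦ vi]`, for the substitution described by `ρ`. -/
def BExp.substEnv (ρ : String → Option Bool) : BExp → BExp
  | .atom a => .atom (a.substEnv ρ)
  | .flip θ => .flip θ
  | .obs a => .obs (a.substEnv ρ)
  | .ite a e1 e2 => .ite (a.substEnv ρ) (e1.substEnv ρ) (e2.substEnv ρ)
  | .letin x e1 e2 =>
      .letin x (e1.substEnv ρ) (e2.substEnv (fun y => if y = x then none else ρ y))

/-- Size of an expression (used for termination of the semantics). -/
def BExp.size : BExp → ℕ
  | .atom _ => 1
  | .flip _ => 1
  | .obs _ => 1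
  | .ite _ e1 e2 => e1.size + e2.size + 1
  | .letin _ e1 e2 => e1.size + e2.size + 1

theorem BExp.size_substEnv (ρ : String → Option Bool) (e : BExp) :
    (e.substEnv ρ).size = e.size := by
  induction e generalizing ρ <;> simp [BExp.substEnv, BExp.size, *]

/-- The unnormalized denotational semantics `⟦e⟧ : Bool → ℝ` of a (closed)
Boolean Dice expression:
* `⟦v1⟧(v) = 1` if `v = v1` and `0` otherwise;
* `⟦flip θ⟧(true) = θ` and `⟦flip θ⟧(false) = 1 − θ`;
* `⟦observe v1⟧(v) = 1` if `v1 = true` and `v = true`, else `0`;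
* `⟦if true then e1 else e2⟧ = ⟦e1⟧`, `⟦if false then e1 else e2⟧ = ⟦e2⟧`;
* `⟦let x = e1 in e2⟧(v) = Σ_{v'} ⟦e1⟧(v') · ⟦e2[x ↦ v']⟧(v)`.
(Expressions that still contain free variables in evaluation position get the
always-zero semantics, for totality.) -/
noncomputable def BExp.sem : BExp → Bool → ℝ
  | .atom (.const b), v => if v = b then 1 else 0
  | .atom (.var _), _ => 0
  | .flip θ, v => if v then θ else 1 - θ
  | .obs (.const true), v => if v then 1 else 0
  | .obs _, _ => 0
  | .ite (.const true) e1 _, v => e1.sem v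
  | .ite (.const false) _ e2, v => e2.sem v
  | .ite (.var _) _ _, _ => 0
  | .letin x e1 e2, v =>
      ∑ v' : Bool,
        e1.sem v' * (e2.substEnv (fun y => if y = x then some v' else none)).sem v
termination_by e _ => e.size
decreasing_by all_goals · simp [BExp.size, BExp.size_substEnv] <;> omega

/-- Propositional formulas over flip variables (numbered by `ℕ`) and program
variables (named by `String`). -/
inductive Form : Type
  | tt : Form
  | ff : Form
  | fvar : ℕ → Form
  | pvar : String → Form
  | not : Form → Form
  | and : Form → Form → Form
  | or : Form → Form → Form
  | iff : Form → Form → Form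

/-- Evaluation of a formula under truth assignments for flip and program
variables. -/
def Form.eval (σ : ℕ → Bool) (ρ : String → Bool) : Form → Bool
  | .tt => true
  | .ff => false
  | .fvar i => σ i
  | .pvar x => ρ x
  | .not φ => !(φ.eval σ ρ)
  | .and φ ψ => φ.eval σ ρ && ψ.eval σ ρ
  | .or φ ψ => φ.eval σ ρ || ψ.eval σ ρ
  | .iff φ ψ => φ.eval σ ρ == ψ.eval σ ρ

/-- Logical substitution `φ[x ↦ ψ]` of a formula for a program variable. -/
def Form.psubst : Form → String → Form → Form
  | .tt, _, _ => .tt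
  | .ff, _, _ => .ff
  | .fvar i, _, _ => .fvar i
  | .pvar y, x, ψ => if y = x then ψ else .pvar y
  | .not φ, x, ψ => .not (φ.psubst x ψ)
  | .and φ1 φ2, x, ψ => .and (φ1.psubst x ψ) (φ2.psubst x ψ)
  | .or φ1 φ2, x, ψ => .or (φ1.psubst x ψ) (φ2.psubst x ψ)
  | .iff φ1 φ2, x, ψ => .iff (φ1.psubst x ψ) (φ2.psubst x ψ)

/-- Substitution `[xi ↦ vi]` of Boolean values for the program variables of a
formula (every program variable is replaced by the constant it is mapped to). -/
def Form.substProg (ρ : String → Bool) : Form → Form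
  | .tt => .tt
  | .ff => .ff
  | .fvar i => .fvar i
  | .pvar x => if ρ x then .tt else .ff
  | .not φ => .not (φ.substProg ρ)
  | .and φ ψ => .and (φ.substProg ρ) (ψ.substProg ρ)
  | .or φ ψ => .or (φ.substProg ρ) (ψ.substProg ρ)
  | .iff φ ψ => .iff (φ.substProg ρ) (ψ.substProg ρ)

/-- A Boolean value as a constant formula. -/
def Form.ofBool : Bool → Form
  | true => .tt
  | false => .ff

/-- Compilation of an atomic expression to its unnormalized formula. -/
def AExp.comp : AExp → Form
  | .const true => .tt
  | .const false => .ff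
  | .var x => .pvar x

/-- The compilation relation `e ⤳ (φ, γ, w)` of Boolean Dice expressions to
weighted Boolean formulas, producing the unnormalized formula `φ`, the
accepting formula `γ`, and the weight function `w`.  Freshness of flip
variables is modeled by threading a counter: `Comp e n m φ γ w` means `e`
compiles using the fresh flip variables `n, n+1, …, m−1`; the weight function
`w` is a single global function constrained at each flip variable (the union of
weight functions with disjoint domains). -/
inductive Comp : BExp → ℕ → ℕ → Form → Form → (ℕ → Bool → ℝ) → Prop
  | atom (a : AExp) (n : ℕ) (w : ℕ → Bool → ℝ) :
      Comp (.atom a) n n a.comp .tt w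
  | flip (θ : ℝ) (n : ℕ) (w : ℕ → Bool → ℝ)
      (h0 : 0 ≤ θ) (h1 : θ ≤ 1)
      (hwt : w n true = θ) (hwf : w n false = 1 - θ) :
      Comp (.flip θ) n (n + 1) (.fvar n) .tt w
  | obs (a : AExp) (n : ℕ) (w : ℕ → Bool → ℝ) :
      Comp (.obs a) n n .tt a.comp w
  | ite (a : AExp) (eT eE : BExp) (φT γT φE γE : Form) (n m k : ℕ)
      (w : ℕ → Bool → ℝ)
      (hT : Comp eT n m φT γT w) (hE : Comp eE m k φE γE w) :
      Comp (.ite a eT eE) n k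
        (.or (.and a.comp φT) (.and (.not a.comp) φE))
        (.or (.and a.comp γT) (.and (.not a.comp) γE)) w
  | letin (x : String) (e1 e2 : BExp) (φ1 γ1 φ2 γ2 : Form) (n m k : ℕ)
      (w : ℕ → Bool → ℝ)
      (h1 : Comp e1 n m φ1 γ1 w) (h2 : Comp e2 m k φ2 γ2 w) :
      Comp (.letin x e1 e2) n k
        (φ2.psubst x φ1)
        (.and γ1 (γ2.psubst x φ1)) w

/-- The weighted model count of a formula over the flip variables `0, …, n−1`:
`WMC(φ, w) = Σ_{ω ⊨ φ} Π_{l ∈ ω} w(l)`, the sum over all total truth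
assignments of those variables satisfying `φ` of the product of the literal
weights.  (Program variables, which do not occur after substitution, are
evaluated as `false`.) -/
noncomputable def WMC (n : ℕ) (φ : Form) (w : ℕ → Bool → ℝ) : ℝ :=
  ∑ σ : Fin n → Bool,
    if φ.eval (fun i => if h : i < n then σ ⟨i, h⟩ else false) (fun _ => false)
    then ∏ i : Fin n, w i (σ i) else 0



/-- Value of an atomic expression under a total Boolean environment. -/
def AExp.bval (ρ : String → Bool) : AExp → Bool
  | .const b => b
  | .var x => ρ x

lemma AExp.substEnv_total (ρ : String → Bool) (a : AExp) :
    a.substEnv (fun x => some (ρ x)) = .const (a.bval ρ) := by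
  cases a <;> simp [AExp.substEnv, AExp.bval]

lemma AExp.eval_comp (σ : ℕ → Bool) (ρ : String → Bool) (a : AExp) :
    a.comp.eval σ ρ = a.bval ρ := by
  cases a with
  | const b => cases b <;> simp [AExp.comp, AExp.bval, Form.eval]
  | var x => simp [AExp.comp, AExp.bval, Form.eval]

lemma Form.eval_ofBool (σ : ℕ → Bool) (ρ : String → Bool) (v : Bool) :
    (Form.ofBool v).eval σ ρ = v := by cases v <;> rfl

lemma Form.eval_substProg (ρ : String → Bool) (σ : ℕ → Bool) (ρ' : String → Bool) (φ : Form) :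
    (φ.substProg ρ).eval σ ρ' = φ.eval σ ρ := by
  induction φ with
  | pvar x => by_cases h : ρ x <;> simp [Form.substProg, Form.eval, h]
  | _ => simp [Form.substProg, Form.eval, *]

lemma Form.eval_psubst (σ : ℕ → Bool) (ρ : String → Bool) (x : String) (ψ : Form) (φ : Form) :
    (φ.psubst x ψ).eval σ ρ = φ.eval σ (fun y => if y = x then ψ.eval σ ρ else ρ y) := by
  induction φ with
  | pvar y => by_cases h : y = x <;> simp [Form.psubst, Form.eval, h]
  | _ => simp [Form.psubst, Form.eval, *]

lemma Comp.le {e n m φ γ w} (h : Comp e n m φ γ w) : n ≤ m := by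
  induction h <;> omega

lemma Comp.scoped {e n m φ γ w} (h : Comp e n m φ γ w) :
    ∀ σ σ' : ℕ → Bool, (∀ i, n ≤ i → i < m → σ i = σ' i) →
      ∀ ρ : String → Bool, φ.eval σ ρ = φ.eval σ' ρ ∧ γ.eval σ ρ = γ.eval σ' ρ := by
  induction h with
  | atom a n w =>
      intro σ σ' _ ρ
      exact ⟨by rw [AExp.eval_comp, AExp.eval_comp], rfl⟩
  | flip θ n w h0 h1 hwt hwf =>
      intro σ σ' hag ρ
      exact ⟨hag n (le_refl n) (by omega), rfl⟩
  | obs a n w =>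
      intro σ σ' _ ρ
      exact ⟨rfl, by rw [AExp.eval_comp, AExp.eval_comp]⟩
  | ite a eT eE φT γT φE γE n m k w hT hE ihT ihE =>
      intro σ σ' hag ρ
      have HT := ihT σ σ' (fun i h1 h2 => hag i h1 (by have := hE.le; omega)) ρ
      have HE := ihE σ σ' (fun i h1 h2 => hag i (by have := hT.le; omega) h2) ρ
      constructor <;>
        simp [Form.eval, AExp.eval_comp, HT.1, HT.2, HE.1, HE.2]
  | letin x e1 e2 φ1 γ1 φ2 γ2 n m k w h1 h2 ih1 ih2 =>
      intro σ σ' hag ρ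
      have H1 := ih1 σ σ' (fun i hi1 hi2 => hag i hi1 (by have := h2.le; omega)) ρ
      have H2 := ih2 σ σ' (fun i hi1 hi2 => hag i (by have := h1.le; omega) hi2)
        (fun y => if y = x then φ1.eval σ' ρ else ρ y)
      constructor
      · rw [Form.eval_psubst, Form.eval_psubst, H1.1, H2.1]
      · simp only [Form.eval, Form.eval_psubst, H1.1, H1.2, H2.2]

lemma Comp.wsum {e n m φ γ w} (h : Comp e n m φ γ w) :
    ∀ i, n ≤ i → i < m → w i true + w i false = 1 := by
  induction h with
  | atom a n w => intro i h1 h2; omega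
  | flip θ n w h0 h1 hwt hwf =>
      intro i hi1 hi2
      have : i = n := by omega
      subst this
      rw [hwt, hwf]; ring
  | obs a n w => intro i h1 h2; omega
  | ite a eT eE φT γT φE γE n m k w hT hE ihT ihE =>
      intro i h1 h2
      rcases lt_or_ge i m with h' | h'
      · exact ihT i h1 h'
      · exact ihE i h' h2
  | letin x e1 e2 φ1 γ1 φ2 γ2 n m k w h1 h2 ih1 ih2 =>
      intro i hi1 hi2
      rcases lt_or_ge i m with h' | h'
      · exact ih1 i hi1 h'
      · exact ih2 i h' hi2

lemma AExp.substEnv_comp (ρ1 ρ2 : String → Option Bool) (a : AExp) :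
    (a.substEnv ρ1).substEnv ρ2
      = a.substEnv (fun y => match ρ1 y with | some b => some b | none => ρ2 y) := by
  cases a with
  | const b => rfl
  | var x =>
      simp only [AExp.substEnv]
      cases h : ρ1 x <;> simp [AExp.substEnv, h]

lemma BExp.substEnv_comp (ρ1 ρ2 : String → Option Bool) (e : BExp) :
    (e.substEnv ρ1).substEnv ρ2
      = e.substEnv (fun y => match ρ1 y with | some b => some b | none => ρ2 y) := by
  induction e generalizing ρ1 ρ2 with
  | atom a => simp [BExp.substEnv, AExp.substEnv_comp]
  | flip θ => rfl
  | obs a => simp [BExp.substEnv, AExp.substEnv_comp]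
  | ite a e1 e2 ih1 ih2 => simp [BExp.substEnv, AExp.substEnv_comp, ih1, ih2]
  | letin x e1 e2 ih1 ih2 =>
      simp only [BExp.substEnv, ih1, ih2]
      congr 1
      exact congrArg (fun ρ => BExp.substEnv ρ e2)
        (funext fun y => by by_cases h : y = x <;> simp [h])

/-- Environment for flip variables in the range `[n, m)`. -/
def fenv (n m : ℕ) (σ : Fin (m - n) → Bool) : ℕ → Bool :=
  fun i => if h : n ≤ i ∧ i < m then σ ⟨i - n, by omega⟩ else false

/-- Gluing of two assignments on `[n,m)` and `[m,k)` into one on `[n,k)`. -/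
def glue (n m k : ℕ) (σ1 : Fin (m - n) → Bool) (σ2 : Fin (k - m) → Bool) :
    Fin (k - n) → Bool :=
  fun i => if h : (i : ℕ) < m - n then σ1 ⟨i, h⟩
           else σ2 ⟨(i : ℕ) - (m - n), by omega⟩

def glueEquiv (n m k : ℕ) (hnm : n ≤ m) (hmk : m ≤ k) :
    ((Fin (m - n) → Bool) × (Fin (k - m) → Bool)) ≃ (Fin (k - n) → Bool) where
  toFun p := glue n m k p.1 p.2
  invFun σ := (fun i => σ ⟨(i : ℕ), by omega⟩, fun j => σ ⟨(m - n) + (j : ℕ), by omega⟩)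
  left_inv := by
    rintro ⟨σ1, σ2⟩
    refine Prod.ext ?_ ?_ <;> funext i <;> simp only [glue]
    · rw [dif_pos (show ((⟨(i : ℕ), by omega⟩ : Fin (k - n)) : ℕ) < m - n from i.isLt)]
    · rw [dif_neg (show ¬ ((⟨(m - n) + (i : ℕ), by omega⟩ : Fin (k - n)) : ℕ) < m - n by simp)]
      congr 1
      exact Fin.ext (by simp)
  right_inv := by
    intro σ
    funext i
    simp only [glue]
    split
    · rfl
    · congr 1
      exact Fin.ext (by simp; omega)

lemma fenv_glue_left (n m k : ℕ) (hnm : n ≤ m) (hmk : m ≤ k)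
    (σ1 : Fin (m - n) → Bool) (σ2 : Fin (k - m) → Bool) :
    ∀ i, n ≤ i → i < m → fenv n k (glue n m k σ1 σ2) i = fenv n m σ1 i := by
  intro i h1 h2
  simp only [fenv, glue]
  rw [dif_pos (show n ≤ i ∧ i < k from ⟨h1, by omega⟩),
    dif_pos (show n ≤ i ∧ i < m from ⟨h1, h2⟩),
    dif_pos (show ((⟨i - n, by omega⟩ : Fin (k - n)) : ℕ) < m - n by simp; omega)]

lemma fenv_glue_right (n m k : ℕ) (hnm : n ≤ m) (hmk : m ≤ k)
    (σ1 : Fin (m - n) → Bool) (σ2 : Fin (k - m) → Bool) :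
    ∀ i, m ≤ i → i < k → fenv n k (glue n m k σ1 σ2) i = fenv m k σ2 i := by
  intro i h1 h2
  simp only [fenv, glue]
  rw [dif_pos (show n ≤ i ∧ i < k from ⟨by omega, h2⟩),
    dif_pos (show m ≤ i ∧ i < k from ⟨h1, h2⟩),
    dif_neg (show ¬ ((⟨i - n, by omega⟩ : Fin (k - n)) : ℕ) < m - n by simp; omega)]
  congr 1
  exact Fin.ext (by simp; omega)

lemma prod_glue (n m k : ℕ) (hnm : n ≤ m) (hmk : m ≤ k) (w : ℕ → Bool → ℝ)
    (σ1 : Fin (m - n) → Bool) (σ2 : Fin (k - m) → Bool) :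
    (∏ i : Fin (k - n), w (n + (i : ℕ)) (glue n m k σ1 σ2 i))
      = (∏ i : Fin (m - n), w (n + (i : ℕ)) (σ1 i))
        * ∏ j : Fin (k - m), w (m + (j : ℕ)) (σ2 j) := by
  have hkn : (m - n) + (k - m) = k - n := by omega
  rw [← Equiv.prod_comp (finCongr hkn) (fun i => w (n + (i : ℕ)) (glue n m k σ1 σ2 i))]
  rw [Fin.prod_univ_add]
  congr 1
  · apply Finset.prod_congr rfl
    intro i _
    simp only [finCongr_apply, Fin.coe_cast, Fin.coe_castAdd, glue]
    rw [dif_pos i.isLt]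
  · apply Finset.prod_congr rfl
    intro j _
    simp only [finCongr_apply, Fin.coe_cast, Fin.coe_natAdd, glue]
    rw [dif_neg (by omega)]
    have hw : n + (m - n + (j : ℕ)) = m + (j : ℕ) := by omega
    rw [hw]
    simp only [show m - n + (j : ℕ) - (m - n) = (j : ℕ) from by omega, Fin.eta]

lemma sum_prod_one (a d : ℕ) (w : ℕ → Bool → ℝ)
    (hw : ∀ i, a ≤ i → i < a + d → w i true + w i false = 1) :
    ∑ σ : Fin d → Bool, ∏ i : Fin d, w (a + (i : ℕ)) (σ i) = 1 := by
  have := Finset.prod_univ_sum (fun _ : Fin d => (Finset.univ : Finset Bool))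
    (fun i b => w (a + (i : ℕ)) b)
  rw [Fintype.piFinset_univ] at this
  rw [← this]
  have : ∀ i : Fin d, ∑ b : Bool, w (a + (i : ℕ)) b = 1 := by
    intro i
    rw [Fintype.sum_bool]
    exact hw (a + i) (by omega) (by omega)
  rw [Finset.prod_congr rfl (fun i _ => this i), Finset.prod_const_one]


lemma sum_dim_zero (d : ℕ) (hd : d = 0) (G : (Fin d → Bool) → ℝ) :
    ∑ σ : Fin d → Bool, G σ = G (fun _ => false) := by
  subst hd
  rw [Fintype.sum_unique]
  congr 1
  funext i
  exact i.elim0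

lemma sum_dim_one (n : ℕ) (G : (Fin (n + 1 - n) → Bool) → ℝ) :
    ∑ σ : Fin (n + 1 - n) → Bool, G σ = G (fun _ => true) + G (fun _ => false) := by
  rw [← Equiv.sum_comp (⟨fun b _ => b, fun σ => σ ⟨0, by omega⟩, fun b => rfl, by
        intro σ; funext i
        have : i = ⟨0, by omega⟩ := Fin.ext (by omega)
        rw [this]⟩ : Bool ≃ (Fin (n + 1 - n) → Bool)) G, Fintype.sum_bool]
  simp only [Equiv.coe_fn_mk]

lemma prod_dim_one (n : ℕ) (f : ℕ → ℝ) :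
    ∏ i : Fin (n + 1 - n), f (n + (i : ℕ)) = f n := by
  have h1 : (1 : ℕ) = n + 1 - n := by omega
  rw [← Equiv.prod_comp (finCongr h1) (fun i : Fin (n + 1 - n) => f (n + (i : ℕ)))]
  rw [Fin.prod_univ_one]
  simp

theorem main_correct {e : BExp} {n m : ℕ} {φ γ : Form} {w : ℕ → Bool → ℝ}
    (h : Comp e n m φ γ w) :
    ∀ (ρ : String → Bool) (v : Bool),
    (e.substEnv (fun x => some (ρ x))).sem v
      = ∑ σ : Fin (m - n) → Bool,
          if ((φ.iff (Form.ofBool v)).and γ).eval (fenv n m σ) ρ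
          then ∏ i : Fin (m - n), w (n + (i : ℕ)) (σ i) else 0 := by
  induction h with
  | atom a n w =>
      intro ρ v
      rw [BExp.substEnv, AExp.substEnv_total]
      rw [sum_dim_zero (n - n) (by omega)]
      haveI : IsEmpty (Fin (n - n)) := ⟨fun i => absurd i.isLt (by omega)⟩
      simp only [Finset.univ_eq_empty, Finset.prod_empty]
      simp only [Form.eval, AExp.eval_comp, Form.eval_ofBool]
      cases hb : a.bval ρ <;> cases v <;> simp [BExp.sem]
  | obs a n w =>
      intro ρ v
      rw [BExp.substEnv, AExp.substEnv_total]
      rw [sum_dim_zero (n - n) (by omega)]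
      haveI : IsEmpty (Fin (n - n)) := ⟨fun i => absurd i.isLt (by omega)⟩
      simp only [Finset.univ_eq_empty, Finset.prod_empty]
      simp only [Form.eval, AExp.eval_comp, Form.eval_ofBool]
      cases hb : a.bval ρ <;> cases v <;> simp [BExp.sem]
  | flip θ n w h0 h1 hwt hwf =>
      intro ρ v
      rw [BExp.substEnv]
      rw [sum_dim_one n]
      have hf : ∀ b : Bool, fenv n (n + 1) (fun _ => b) n = b := by
        intro b
        simp only [fenv]
        rw [dif_pos (show n ≤ n ∧ n < n + 1 from ⟨le_refl n, by omega⟩)]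
      simp only [Form.eval, Form.eval_ofBool, hf]
      rw [show (∏ i : Fin (n + 1 - n), w (n + (i : ℕ)) ((fun _ => true) i)) = w n true from
        prod_dim_one n (fun j => w j true)]
      rw [show (∏ i : Fin (n + 1 - n), w (n + (i : ℕ)) ((fun _ => false) i)) = w n false from
        prod_dim_one n (fun j => w j false)]
      cases v <;> simp [BExp.sem, hwt, hwf]
  | ite a eT eE φT γT φE γE n m k w hT hE ihT ihE =>
      intro ρ v
      rw [BExp.substEnv, AExp.substEnv_total]
      rw [← Equiv.sum_comp (glueEquiv n m k hT.le hE.le), Fintype.sum_prod_type]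
      simp only [show ∀ σ1 σ2, glueEquiv n m k hT.le hE.le (σ1, σ2) = glue n m k σ1 σ2
        from fun _ _ => rfl]
      have hone2 : ∑ σ2 : Fin (k - m) → Bool, ∏ j : Fin (k - m), w (m + (j : ℕ)) (σ2 j) = 1 :=
        sum_prod_one m (k - m) w (fun i hi1 hi2 => hE.wsum i hi1 (by have := hE.le; omega))
      have hone1 : ∑ σ1 : Fin (m - n) → Bool, ∏ i : Fin (m - n), w (n + (i : ℕ)) (σ1 i) = 1 :=
        sum_prod_one n (m - n) w (fun i hi1 hi2 => hT.wsum i hi1 (by have := hT.le; omega))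
      cases hc : a.bval ρ with
      | true =>
          have hsem : (BExp.ite (.const true) (eT.substEnv fun x => some (ρ x))
              (eE.substEnv fun x => some (ρ x))).sem v
              = (eT.substEnv fun x => some (ρ x)).sem v := by simp [BExp.sem]
          rw [hsem, ihT ρ v]
          refine Finset.sum_congr rfl fun σ1 _ => ?_
          calc (if ((φT.iff (Form.ofBool v)).and γT).eval (fenv n m σ1) ρ
                then ∏ i : Fin (m - n), w (n + (i : ℕ)) (σ1 i) else 0)
              = ∑ σ2 : Fin (k - m) → Bool,
                  (if ((φT.iff (Form.ofBool v)).and γT).eval (fenv n m σ1) ρ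
                   then ∏ i : Fin (m - n), w (n + (i : ℕ)) (σ1 i) else 0)
                    * ∏ j : Fin (k - m), w (m + (j : ℕ)) (σ2 j) := by
                rw [← Finset.mul_sum, hone2, mul_one]
            _ = _ := by
                refine Finset.sum_congr rfl fun σ2 _ => ?_
                have H := hT.scoped (fenv n k (glue n m k σ1 σ2)) (fenv n m σ1)
                  (fenv_glue_left n m k hT.le hE.le σ1 σ2) ρ
                rw [prod_glue n m k hT.le hE.le w σ1 σ2]
                simp only [Form.eval, AExp.eval_comp, Form.eval_ofBool, hc, H.1, H.2,
                  Bool.true_and, Bool.false_and, Bool.or_false, Bool.false_or,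
                  Bool.not_true, Bool.not_false]
                split <;> simp
      | false =>
          have hsem : (BExp.ite (.const false) (eT.substEnv fun x => some (ρ x))
              (eE.substEnv fun x => some (ρ x))).sem v
              = (eE.substEnv fun x => some (ρ x)).sem v := by simp [BExp.sem]
          rw [hsem, ihE ρ v, Finset.sum_comm]
          refine Finset.sum_congr rfl fun σ2 _ => ?_
          calc (if ((φE.iff (Form.ofBool v)).and γE).eval (fenv m k σ2) ρ
                then ∏ j : Fin (k - m), w (m + (j : ℕ)) (σ2 j) else 0)
              = ∑ σ1 : Fin (m - n) → Bool,
                  (∏ i : Fin (m - n), w (n + (i : ℕ)) (σ1 i))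
                    * (if ((φE.iff (Form.ofBool v)).and γE).eval (fenv m k σ2) ρ
                       then ∏ j : Fin (k - m), w (m + (j : ℕ)) (σ2 j) else 0) := by
                rw [← Finset.sum_mul, hone1, one_mul]
            _ = _ := by
                refine Finset.sum_congr rfl fun σ1 _ => ?_
                have H := hE.scoped (fenv n k (glue n m k σ1 σ2)) (fenv m k σ2)
                  (fenv_glue_right n m k hT.le hE.le σ1 σ2) ρ
                rw [prod_glue n m k hT.le hE.le w σ1 σ2]
                simp only [Form.eval, AExp.eval_comp, Form.eval_ofBool, hc, H.1, H.2,
                  Bool.true_and, Bool.false_and, Bool.or_false, Bool.false_or,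
                  Bool.not_true, Bool.not_false]
                split <;> simp
  | letin x e1 e2 φ1 γ1 φ2 γ2 n m k w h1 h2 ih1 ih2 =>
      intro ρ v
      rw [BExp.substEnv, BExp.sem]
      have hcomp : ∀ v' : Bool,
          ((e2.substEnv (fun y => if y = x then none else some (ρ y))).substEnv
            (fun y => if y = x then some v' else none))
          = e2.substEnv (fun y => some (if y = x then v' else ρ y)) := by
        intro v'
        rw [BExp.substEnv_comp]
        exact congrArg (fun ρ' => BExp.substEnv ρ' e2)
          (funext fun y => by by_cases h : y = x <;> simp [h])
      simp only [hcomp, ih1, ih2]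
      rw [← Equiv.sum_comp (glueEquiv n m k h1.le h2.le), Fintype.sum_prod_type]
      simp only [show ∀ σ1 σ2, glueEquiv n m k h1.le h2.le (σ1, σ2) = glue n m k σ1 σ2
        from fun _ _ => rfl]
      simp only [Finset.sum_mul]
      rw [Finset.sum_comm]
      simp only [Form.eval, Form.eval_ofBool, Form.eval_psubst]
      refine Finset.sum_congr rfl fun σ1 _ => ?_
      rw [Fintype.sum_bool]
      cases hb : φ1.eval (fenv n m σ1) ρ with
      | true =>
          by_cases hg : γ1.eval (fenv n m σ1) ρ = true
          · rw [if_pos (by simp [hg]), if_neg (by simp), zero_mul, add_zero, Finset.mul_sum]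
            refine Finset.sum_congr rfl fun σ2 _ => ?_
            have H1 := h1.scoped (fenv n k (glue n m k σ1 σ2)) (fenv n m σ1)
              (fenv_glue_left n m k h1.le h2.le σ1 σ2) ρ
            have H2 := h2.scoped (fenv n k (glue n m k σ1 σ2)) (fenv m k σ2)
              (fenv_glue_right n m k h1.le h2.le σ1 σ2) (fun y => if y = x then true else ρ y)
            rw [prod_glue n m k h1.le h2.le w σ1 σ2]
            simp only [H1.1, H1.2, hb, hg, Bool.true_and, H2.1, H2.2]
            split <;> simp
          · rw [if_neg (by simp [hg]), if_neg (by simp), zero_mul, zero_mul, add_zero]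
            symm
            apply Finset.sum_eq_zero
            intro σ2 _
            have H1 := h1.scoped (fenv n k (glue n m k σ1 σ2)) (fenv n m σ1)
              (fenv_glue_left n m k h1.le h2.le σ1 σ2) ρ
            rw [if_neg (by simp [H1.2, hg])]
      | false =>
          by_cases hg : γ1.eval (fenv n m σ1) ρ = true
          · rw [if_neg (by simp), if_pos (by simp [hg]), zero_mul, zero_add, Finset.mul_sum]
            refine Finset.sum_congr rfl fun σ2 _ => ?_
            have H1 := h1.scoped (fenv n k (glue n m k σ1 σ2)) (fenv n m σ1)
              (fenv_glue_left n m k h1.le h2.le σ1 σ2) ρ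
            have H2 := h2.scoped (fenv n k (glue n m k σ1 σ2)) (fenv m k σ2)
              (fenv_glue_right n m k h1.le h2.le σ1 σ2) (fun y => if y = x then false else ρ y)
            rw [prod_glue n m k h1.le h2.le w σ1 σ2]
            simp only [H1.1, H1.2, hb, hg, Bool.true_and, H2.1, H2.2]
            split <;> simp
          · rw [if_neg (by simp), if_neg (by simp [hg]), zero_mul, zero_mul, zero_add]
            symm
            apply Finset.sum_eq_zero
            intro σ2 _
            have H1 := h1.scoped (fenv n k (glue n m k σ1 σ2)) (fenv n m σ1)
              (fenv_glue_left n m k h1.le h2.le σ1 σ2) ρ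
            rw [if_neg (by simp [H1.2, hg])]
/-- **Boolean expression correctness (key lemma).**  If a Boolean Dice
expression `e` with free variables among `x1, …, xn` compiles as
`e ⤳ (φ, γ, w)`, then for any Boolean values `v1, …, vn` (given by the
environment `ρ`) and any Boolean value `v`, the unnormalized semantics
satisfies `⟦e[xi ↦ vi]⟧(v) = WMC(((φ ⇔ v) ∧ γ)[xi ↦ vi], w)`. -/
theorem boolean_expression_unnormalized_correctness
    (e : BExp) (n : ℕ) (φ γ : Form) (w : ℕ → Bool → ℝ)
    (h : Comp e 0 n φ γ w) (ρ : String → Bool) (v : Bool) :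
    (e.substEnv (fun x => some (ρ x))).sem v
      = WMC n (((φ.iff (Form.ofBool v)).and γ).substProg ρ) w := by
  rw [main_correct h ρ v]
  rw [WMC]
  refine Finset.sum_congr rfl fun σ _ => ?_
  rw [Form.eval_substProg]
  have henv : (fun i => if h : i < n then σ ⟨i, h⟩ else false) = fenv 0 n σ := by
    funext i
    simp only [fenv]
    by_cases hi : i < n
    · rw [dif_pos hi, dif_pos (show 0 ≤ i ∧ i < n from ⟨Nat.zero_le i, hi⟩)]
      rfl
    · rw [dif_neg hi, dif_neg (by omega)]
  rw [henv]
  congr 1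
  refine Finset.prod_congr rfl fun i _ => ?_
  rw [Nat.zero_add]
end

section
/- Let e be a Boolean Dice expression with free variables x1,...,xn and suppose e ⤳ (φ, γ, w). Then for any Boolean values v1,...,vn: (1) the accepting semantics satisfies ⟦e[xi ↦ vi]⟧_A = WMC(γ[xi ↦ vi], w); and (2) for any Boolean value v, the distributional semantics satisfies ⟦e[xi ↦ vi]⟧_D(v) = WMC(((φ ⇔ v) ∧ γ)[xi ↦ vi], w) / WMC(γ[xi ↦ vi], w), where a quotient with zero denominator is defined to be 0. -/
/-- The accepting semantics `⟦e⟧_A = Σ_v ⟦e⟧(v)`. -/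
noncomputable def BExp.semA (e : BExp) : ℝ := ∑ v : Bool, e.sem v

/-- The distributional semantics `⟦e⟧_D(v) = ⟦e⟧(v) / ⟦e⟧_A`, defined to be `0`
when `⟦e⟧_A = 0` (in Lean, real division by zero is zero). -/
noncomputable def BExp.semD (e : BExp) (v : Bool) : ℝ := e.sem v / e.semA


/-! ### Auxiliary development -/

namespace DiceAux

/-- Substitute a flip variable by a Boolean constant. -/
def fsubst : Form → ℕ → Bool → Form
  | .tt, _, _ => .tt
  | .ff, _, _ => .ff
  | .fvar j, i, b => if j = i then (if b then .tt else .ff) else .fvar j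
  | .pvar y, _, _ => .pvar y
  | .not φ, i, b => .not (fsubst φ i b)
  | .and φ ψ, i, b => .and (fsubst φ i b) (fsubst ψ i b)
  | .or φ ψ, i, b => .or (fsubst φ i b) (fsubst ψ i b)
  | .iff φ ψ, i, b => .iff (fsubst φ i b) (fsubst ψ i b)

def updN (σ : ℕ → Bool) (i : ℕ) (b : Bool) : ℕ → Bool := fun j => if j = i then b else σ j

lemma eval_fsubst (σ : ℕ → Bool) (r : String → Bool) (i : ℕ) (b : Bool) :
    ∀ φ : Form, (fsubst φ i b).eval σ r = φ.eval (updN σ i b) r := by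
  intro φ
  induction φ with
  | fvar j =>
      by_cases h : j = i
      · cases b <;> simp [fsubst, h, Form.eval, updN]
      · simp [fsubst, h, Form.eval, updN]
  | _ => simp_all [fsubst, Form.eval, updN]

/-- All flip variables lie in `[lo, hi)`. -/
def Bdd (lo hi : ℕ) : Form → Prop
  | .tt => True
  | .ff => True
  | .fvar j => lo ≤ j ∧ j < hi
  | .pvar _ => True
  | .not φ => Bdd lo hi φ
  | .and φ ψ => Bdd lo hi φ ∧ Bdd lo hi ψ
  | .or φ ψ => Bdd lo hi φ ∧ Bdd lo hi ψ
  | .iff φ ψ => Bdd lo hi φ ∧ Bdd lo hi ψ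

lemma Bdd.mono {lo hi lo' hi' : ℕ} (h1 : lo' ≤ lo) (h2 : hi ≤ hi') :
    ∀ {φ : Form}, Bdd lo hi φ → Bdd lo' hi' φ := by
  intro φ h
  induction φ <;> simp_all [Bdd] <;> omega

lemma fsubst_of_not_bdd {lo hi i : ℕ} {b : Bool} {φ : Form}
    (h : Bdd lo hi φ) (hi' : i < lo ∨ hi ≤ i) : fsubst φ i b = φ := by
  induction φ <;> simp_all [Bdd, fsubst] <;> omega

lemma Bdd.fsubst {lo hi : ℕ} {φ : Form} (h : Bdd lo hi φ) (b : Bool) :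
    Bdd (lo + 1) hi (fsubst φ lo b) := by
  induction φ with
  | fvar j =>
      by_cases hj : j = lo
      · cases b <;> simp [DiceAux.fsubst, hj, Bdd]
      · simp_all [DiceAux.fsubst, Bdd]; omega
  | _ => simp_all [DiceAux.fsubst, Bdd]

lemma Bdd.substProg {lo hi : ℕ} {φ : Form} (ρ : String → Bool) (h : Bdd lo hi φ) :
    Bdd lo hi (φ.substProg ρ) := by
  induction φ with
  | pvar x => by_cases hx : ρ x <;> simp [Form.substProg, hx, Bdd]
  | _ => simp_all [Form.substProg, Bdd]

lemma Bdd.psubst {lo hi : ℕ} {x : String} {φ ψ : Form}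
    (h1 : Bdd lo hi φ) (h2 : Bdd lo hi ψ) : Bdd lo hi (φ.psubst x ψ) := by
  induction φ with
  | pvar y => by_cases hy : y = x <;> simp_all [Form.psubst, Bdd]
  | _ => simp_all [Form.psubst, Bdd]

lemma Bdd_comp (lo hi : ℕ) (a : AExp) : Bdd lo hi a.comp := by
  cases a with
  | const b => cases b <;> simp [AExp.comp, Bdd]
  | var x => simp [AExp.comp, Bdd]

lemma Bdd_ofBool (lo hi : ℕ) (v : Bool) : Bdd lo hi (Form.ofBool v) := by
  cases v <;> simp [Form.ofBool, Bdd]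

lemma Bdd_and {lo hi : ℕ} {φ ψ : Form} (h1 : Bdd lo hi φ) (h2 : Bdd lo hi ψ) :
    Bdd lo hi (φ.and ψ) := ⟨h1, h2⟩

lemma Bdd_iff {lo hi : ℕ} {φ ψ : Form} (h1 : Bdd lo hi φ) (h2 : Bdd lo hi ψ) :
    Bdd lo hi (φ.iff ψ) := ⟨h1, h2⟩

lemma Bdd_tt {lo hi : ℕ} : Bdd lo hi .tt := trivial

/-- Weighted count over flip variables `lo, …, hi-1`, computed recursively. -/
noncomputable def pW (w : ℕ → Bool → ℝ) (lo hi : ℕ) (φ : Form) : ℝ :=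
  if h : lo < hi then
    w lo true * pW w (lo + 1) hi (fsubst φ lo true)
      + w lo false * pW w (lo + 1) hi (fsubst φ lo false)
  else if φ.eval (fun _ => false) (fun _ => false) then 1 else 0
termination_by hi - lo
decreasing_by all_goals omega

lemma pW_stop {w : ℕ → Bool → ℝ} {lo hi : ℕ} (h : hi ≤ lo) (φ : Form) :
    pW w lo hi φ = if φ.eval (fun _ => false) (fun _ => false) then 1 else 0 := by
  rw [pW, dif_neg (by omega)]

lemma pW_step {w : ℕ → Bool → ℝ} {lo hi : ℕ} (h : lo < hi) (φ : Form) :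
    pW w lo hi φ = w lo true * pW w (lo + 1) hi (fsubst φ lo true)
      + w lo false * pW w (lo + 1) hi (fsubst φ lo false) := by
  rw [pW, dif_pos h]

lemma pW_congr {w : ℕ → Bool → ℝ} {hi : ℕ} (lo : ℕ) (φ ψ : Form)
    (h : ∀ σ, φ.eval σ (fun _ => false) = ψ.eval σ (fun _ => false)) :
    pW w lo hi φ = pW w lo hi ψ := by
  by_cases hlt : lo < hi
  · rw [pW_step hlt, pW_step hlt,
      pW_congr (lo+1) (fsubst φ lo true) (fsubst ψ lo true)
        (fun σ => by rw [eval_fsubst, eval_fsubst]; exact h _),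
      pW_congr (lo+1) (fsubst φ lo false) (fsubst ψ lo false)
        (fun σ => by rw [eval_fsubst, eval_fsubst]; exact h _)]
  · rw [pW_stop (by omega), pW_stop (by omega), h]
termination_by hi - lo
decreasing_by all_goals omega

lemma pW_or_disjoint {w : ℕ → Bool → ℝ} {hi : ℕ} (lo : ℕ) (φ ψ : Form)
    (h : ∀ σ, φ.eval σ (fun _ => false) = false ∨ ψ.eval σ (fun _ => false) = false) :
    pW w lo hi (φ.or ψ) = pW w lo hi φ + pW w lo hi ψ := by
  by_cases hlt : lo < hi
  · rw [pW_step hlt, pW_step hlt (φ := φ), pW_step hlt (φ := ψ)]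
    simp only [fsubst]
    rw [pW_or_disjoint (lo+1) (fsubst φ lo true) (fsubst ψ lo true)
        (fun σ => by rw [eval_fsubst, eval_fsubst]; exact h _),
      pW_or_disjoint (lo+1) (fsubst φ lo false) (fsubst ψ lo false)
        (fun σ => by rw [eval_fsubst, eval_fsubst]; exact h _)]
    ring
  · rw [pW_stop (by omega), pW_stop (by omega), pW_stop (by omega)]
    rcases h (fun _ => false) with h' | h' <;>
      simp [Form.eval, h'] <;> split <;> simp
termination_by hi - lo
decreasing_by all_goals omega

lemma pW_tt {w : ℕ → Bool → ℝ} {hi : ℕ} (lo : ℕ)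
    (h : ∀ i, lo ≤ i → i < hi → w i true + w i false = 1) :
    pW w lo hi .tt = 1 := by
  by_cases hlt : lo < hi
  · rw [pW_step hlt]
    show w lo true * pW w (lo+1) hi .tt + w lo false * pW w (lo+1) hi .tt = 1
    rw [pW_tt (lo+1) (fun i h1 h2 => h i (by omega) h2)]
    have := h lo le_rfl hlt
    ring_nf
    linarith
  · rw [pW_stop (by omega)]; simp [Form.eval]
termination_by hi - lo
decreasing_by all_goals omega

lemma pW_and_closed {w : ℕ → Bool → ℝ} (A : Form)
    (hA : ∀ i b, fsubst A i b = A) :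
    ∀ lo hi B, pW w lo hi (A.and B)
      = (if A.eval (fun _ => false) (fun _ => false) then 1 else 0) * pW w lo hi B := by
  intro lo hi B
  by_cases hlt : lo < hi
  · rw [pW_step hlt, pW_step hlt (φ := B)]
    simp only [fsubst]
    rw [hA, hA, pW_and_closed A hA (lo+1) hi (fsubst B lo true),
      pW_and_closed A hA (lo+1) hi (fsubst B lo false)]
    ring
  · rw [pW_stop (by omega), pW_stop (by omega)]
    show (if (A.eval _ _ && B.eval _ _) = true then (1:ℝ) else 0) = _
    cases hA' : A.eval (fun _ => false) (fun _ => false) <;>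
      cases hB' : B.eval (fun _ => false) (fun _ => false) <;> simp [hA', hB']
termination_by lo hi B => hi - lo
decreasing_by all_goals omega

lemma pW_split {w : ℕ → Bool → ℝ} {mid hi : ℕ} (lo : ℕ) (A B : Form)
    (hA : Bdd lo mid A) (hB : Bdd mid hi B) (h1 : lo ≤ mid) (h2 : mid ≤ hi) :
    pW w lo hi (A.and B) = pW w lo mid A * pW w mid hi B := by
  by_cases hlt : lo < mid
  · have hlt' : lo < hi := by omega
    rw [pW_step hlt', pW_step hlt (φ := A)]
    simp only [fsubst]
    rw [fsubst_of_not_bdd hB (Or.inl hlt) (b := true),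
      fsubst_of_not_bdd hB (Or.inl hlt) (b := false),
      pW_split (lo+1) (fsubst A lo true) B (hA.fsubst true) hB (by omega) h2,
      pW_split (lo+1) (fsubst A lo false) B (hA.fsubst false) hB (by omega) h2]
    ring
  · have heq : lo = mid := by omega
    subst heq
    rw [pW_and_closed A (fun i b => fsubst_of_not_bdd hA (by omega)) lo hi B,
      pW_stop le_rfl]
termination_by mid - lo
decreasing_by all_goals omega

lemma comp_le {e n m φ γ w} (h : Comp e n m φ γ w) : n ≤ m := by
  induction h <;> omega

lemma comp_bdd {e n m φ γ w} (h : Comp e n m φ γ w) : Bdd n m φ ∧ Bdd n m γ := by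
  induction h with
  | atom a n w => exact ⟨Bdd_comp _ _ _, trivial⟩
  | flip θ n w h0 h1 hwt hwf => exact ⟨⟨le_rfl, Nat.lt_succ_self n⟩, trivial⟩
  | obs a n w => exact ⟨trivial, Bdd_comp _ _ _⟩
  | ite a eT eE φT γT φE γE n m k w hT hE ihT ihE =>
      have hnm := comp_le hT
      have hmk := comp_le hE
      refine ⟨⟨⟨Bdd_comp _ _ _, ihT.1.mono le_rfl hmk⟩, Bdd_comp _ _ _, ihE.1.mono hnm le_rfl⟩,
        ⟨⟨Bdd_comp _ _ _, ihT.2.mono le_rfl hmk⟩, Bdd_comp _ _ _, ihE.2.mono hnm le_rfl⟩⟩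
  | letin x e1 e2 φ1 γ1 φ2 γ2 n m k w h1 h2 ih1 ih2 =>
      have hnm := comp_le h1
      have hmk := comp_le h2
      exact ⟨(ih2.1.mono hnm le_rfl).psubst (ih1.1.mono le_rfl hmk),
        ⟨ih1.2.mono le_rfl hmk, (ih2.2.mono hnm le_rfl).psubst (ih1.1.mono le_rfl hmk)⟩⟩

lemma comp_sum1 {e n m φ γ w} (h : Comp e n m φ γ w) :
    ∀ i, n ≤ i → i < m → w i true + w i false = 1 := by
  induction h with
  | atom a n w => omega
  | flip θ n w h0 h1 hwt hwf =>
      intro i hi1 hi2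
      have : i = n := by omega
      subst this
      rw [hwt, hwf]; ring
  | obs a n w => omega
  | ite a eT eE φT γT φE γE n m k w hT hE ihT ihE =>
      intro i hi1 hi2
      by_cases hm : i < m
      · exact ihT i hi1 hm
      · exact ihE i (by omega) hi2
  | letin x e1 e2 φ1 γ1 φ2 γ2 n m k w h1 h2 ih1 ih2 =>
      intro i hi1 hi2
      by_cases hm : i < m
      · exact ih1 i hi1 hm
      · exact ih2 i (by omega) hi2

lemma eval_substProg (ρ : String → Bool) (σ : ℕ → Bool) (r : String → Bool) :
    ∀ φ : Form, (φ.substProg ρ).eval σ r = φ.eval σ ρ := by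
  intro φ
  induction φ with
  | pvar x => by_cases hx : ρ x <;> simp [Form.substProg, Form.eval, hx]
  | _ => simp_all [Form.substProg, Form.eval]

lemma eval_psubst (x : String) (ψ : Form) (σ : ℕ → Bool) (ρ : String → Bool) :
    ∀ φ : Form, (φ.psubst x ψ).eval σ ρ
      = φ.eval σ (fun y => if y = x then ψ.eval σ ρ else ρ y) := by
  intro φ
  induction φ with
  | pvar y => by_cases hy : y = x <;> simp [Form.psubst, Form.eval, hy]
  | _ => simp_all [Form.psubst, Form.eval]

lemma eval_ofBool (σ : ℕ → Bool) (r : String → Bool) (v : Bool) :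
    (Form.ofBool v).eval σ r = v := by
  cases v <;> rfl

def aval (ρ : String → Bool) : AExp → Bool
  | .const b => b
  | .var x => ρ x

lemma substEnv_aexp (ρ : String → Bool) (a : AExp) :
    a.substEnv (fun x => some (ρ x)) = .const (aval ρ a) := by
  cases a <;> rfl

lemma eval_acomp (σ : ℕ → Bool) (r : String → Bool) (a : AExp) :
    (AExp.comp a).eval σ r = aval r a := by
  cases a with
  | const b => cases b <;> rfl
  | var x => rfl

lemma substEnv_substEnv (ρ1 ρ2 : String → Option Bool) :
    ∀ e : BExp, (e.substEnv ρ1).substEnv ρ2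
      = e.substEnv (fun y => match ρ1 y with | some b => some b | none => ρ2 y) := by
  intro e
  induction e generalizing ρ1 ρ2 with
  | atom a =>
      cases a with
      | const b => rfl
      | var x =>
          simp only [BExp.substEnv, AExp.substEnv]
          cases h : ρ1 x <;> simp [BExp.substEnv, AExp.substEnv, h]
  | flip θ => rfl
  | obs a =>
      cases a with
      | const b => rfl
      | var x =>
          simp only [BExp.substEnv, AExp.substEnv]
          cases h : ρ1 x <;> simp [BExp.substEnv, AExp.substEnv, h]
  | ite a e1 e2 ih1 ih2 =>
      simp only [BExp.substEnv, ih1, ih2]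
      cases a with
      | const b => rfl
      | var x =>
          simp only [AExp.substEnv]
          cases h : ρ1 x <;> simp [AExp.substEnv, h]
  | letin x e1 e2 ih1 ih2 =>
      simp only [BExp.substEnv, ih1, ih2]
      congr 1
      apply congrArg (fun ρ => BExp.substEnv ρ e2)
      funext y
      by_cases hy : y = x <;> simp [hy]

lemma main {e : BExp} {n m : ℕ} {φ γ : Form} {w : ℕ → Bool → ℝ}
    (h : Comp e n m φ γ w) :
    ∀ (ρ : String → Bool) (v : Bool),
      (e.substEnv (fun x => some (ρ x))).sem v
        = pW w n m (((φ.iff (Form.ofBool v)).and γ).substProg ρ) := by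
  induction h with
  | atom a n w =>
      intro ρ v
      rw [pW_stop le_rfl]
      simp only [BExp.substEnv, substEnv_aexp, eval_substProg, Form.eval, eval_ofBool,
        eval_acomp]
      cases hv : aval ρ a <;> cases v <;> simp [BExp.sem, hv]
  | flip θ n w h0 h1 hwt hwf =>
      intro ρ v
      rw [pW_step (Nat.lt_succ_self n)]
      rw [pW_stop le_rfl, pW_stop le_rfl]
      simp only [BExp.substEnv]
      cases v <;>
        simp [BExp.sem, Form.ofBool, Form.substProg, fsubst, Form.eval, hwt, hwf]
  | obs a n w =>
      intro ρ v
      rw [pW_stop le_rfl]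
      simp only [BExp.substEnv, substEnv_aexp, eval_substProg, Form.eval, eval_ofBool,
        eval_acomp]
      cases hv : aval ρ a <;> cases v <;> simp [BExp.sem, hv]
  | ite a eT eE φT γT φE γE n m k w hT hE ihT ihE =>
      intro ρ v
      have hnm := comp_le hT
      have hmk := comp_le hE
      have hbT := comp_bdd hT
      have hbE := comp_bdd hE
      simp only [BExp.substEnv, substEnv_aexp]
      cases hv : aval ρ a with
      | true =>
          have hsem : (BExp.ite (.const true) (eT.substEnv fun x => some (ρ x))
              (eE.substEnv fun x => some (ρ x))).sem v
              = (eT.substEnv fun x => some (ρ x)).sem v := by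
            simp [BExp.sem]
          rw [hsem, ihT ρ v]
          symm
          rw [pW_congr n _ (((((φT.iff (Form.ofBool v)).and γT).substProg ρ).and .tt))
              (fun σ => by
                simp [eval_substProg, Form.eval, eval_acomp, hv, eval_ofBool]),
            pW_split n _ .tt
              (Bdd.substProg ρ (Bdd_and (Bdd_iff hbT.1 (Bdd_ofBool n m v)) hbT.2))
              Bdd_tt hnm hmk,
            pW_tt m (fun i hi1 hi2 => comp_sum1 hE i hi1 hi2), mul_one]
      | false =>
          have hsem : (BExp.ite (.const false) (eT.substEnv fun x => some (ρ x))
              (eE.substEnv fun x => some (ρ x))).sem v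
              = (eE.substEnv fun x => some (ρ x)).sem v := by
            simp [BExp.sem]
          rw [hsem, ihE ρ v]
          symm
          rw [pW_congr n _ ((Form.tt).and ((((φE.iff (Form.ofBool v)).and γE).substProg ρ)))
              (fun σ => by
                simp [eval_substProg, Form.eval, eval_acomp, hv, eval_ofBool]),
            pW_split n .tt _
              Bdd_tt (Bdd.substProg ρ (Bdd_and (Bdd_iff hbE.1 (Bdd_ofBool m k v)) hbE.2))
              hnm hmk,
            pW_tt n (fun i hi1 hi2 => comp_sum1 hT i hi1 hi2), one_mul]
  | letin x e1 e2 φ1 γ1 φ2 γ2 n m k w h1 h2 ih1 ih2 =>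
      intro ρ v
      have hnm := comp_le h1
      have hmk := comp_le h2
      have hb1 := comp_bdd h1
      have hb2 := comp_bdd h2
      simp only [BExp.substEnv]
      have hcomp : ∀ v' : Bool,
          ((e2.substEnv (fun y => if y = x then none else some (ρ y))).substEnv
            (fun y => if y = x then some v' else none))
          = e2.substEnv (fun y => some (if y = x then v' else ρ y)) := by
        intro v'
        rw [substEnv_substEnv]
        apply congrArg (fun ρ' => BExp.substEnv ρ' e2)
        funext y
        by_cases hy : y = x <;> simp [hy]
      have hsem2 : ∀ v' : Bool,
          ((e2.substEnv (fun y => if y = x then none else some (ρ y))).substEnv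
            (fun y => if y = x then some v' else none)).sem v
          = pW w m k (((φ2.iff (Form.ofBool v)).and γ2).substProg
              (fun y => if y = x then v' else ρ y)) := by
        intro v'
        rw [hcomp v']
        exact ih2 (fun y => if y = x then v' else ρ y) v
      have hlhs : (BExp.letin x (e1.substEnv fun y => some (ρ y))
            ((e2.substEnv (fun y => if y = x then none else some (ρ y))))).sem v
          = ∑ v' : Bool, (e1.substEnv fun y => some (ρ y)).sem v'
              * ((e2.substEnv (fun y => if y = x then none else some (ρ y))).substEnv
                  (fun y => if y = x then some v' else none)).sem v := by
        rw [BExp.sem]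
      rw [hlhs, Fintype.sum_bool, hsem2 true, hsem2 false, ih1 ρ true, ih1 ρ false,
        ← pW_split n (((φ1.iff (Form.ofBool true)).and γ1).substProg ρ)
          ((((φ2.iff (Form.ofBool v)).and γ2).substProg (fun y => if y = x then true else ρ y)))
          (Bdd.substProg ρ (Bdd_and (Bdd_iff hb1.1 (Bdd_ofBool n m true)) hb1.2))
          (Bdd.substProg _ (Bdd_and (Bdd_iff hb2.1 (Bdd_ofBool m k v)) hb2.2)) hnm hmk,
        ← pW_split n (((φ1.iff (Form.ofBool false)).and γ1).substProg ρ)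
          ((((φ2.iff (Form.ofBool v)).and γ2).substProg (fun y => if y = x then false else ρ y)))
          (Bdd.substProg ρ (Bdd_and (Bdd_iff hb1.1 (Bdd_ofBool n m false)) hb1.2))
          (Bdd.substProg _ (Bdd_and (Bdd_iff hb2.1 (Bdd_ofBool m k v)) hb2.2)) hnm hmk,
        ← pW_or_disjoint n _ _
          (fun σ => by
            simp only [Form.eval, eval_substProg, eval_ofBool]
            cases hb : Form.eval σ ρ φ1 <;> simp [hb])]
      refine pW_congr n _ _ (fun σ => ?_)
      simp only [Form.eval, eval_substProg, eval_ofBool, eval_psubst]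
      cases hb : Form.eval σ ρ φ1 <;>
        simp [hb, Bool.and_assoc, Bool.and_comm, Bool.and_left_comm]

/-- Total assignment extending a partial assignment of variables `lo, lo+1, …`. -/
def extA (lo : ℕ) {d : ℕ} (σ : Fin d → Bool) : ℕ → Bool :=
  fun i => if h : lo ≤ i ∧ i - lo < d then σ ⟨i - lo, h.2⟩ else false

lemma extA_zero (lo : ℕ) (σ : Fin 0 → Bool) : extA lo σ = fun _ => false := by
  funext i
  rw [extA, dif_neg (by omega)]

lemma extA_cons (lo d : ℕ) (b : Bool) (σ' : Fin d → Bool) :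
    extA lo (Fin.cons b σ' : Fin (d+1) → Bool) = updN (extA (lo+1) σ') lo b := by
  funext i
  by_cases hi1 : i = lo
  · subst hi1
    rw [extA, dif_pos ⟨le_rfl, by omega⟩]
    have h0 : (⟨i - i, by omega⟩ : Fin (d+1)) = 0 := by apply Fin.ext; simp
    rw [h0, Fin.cons_zero, updN, if_pos rfl]
  · rw [extA, updN, if_neg hi1, extA]
    by_cases hi2 : lo + 1 ≤ i ∧ i - (lo + 1) < d
    · rw [dif_pos hi2, dif_pos (by omega)]
      have hs : (⟨i - lo, by omega⟩ : Fin (d+1)) = Fin.succ ⟨i - (lo+1), hi2.2⟩ := by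
        apply Fin.ext
        simp only [Fin.val_succ]
        omega
      rw [hs, Fin.cons_succ]
    · rw [dif_neg hi2, dif_neg (by omega)]

lemma pW_eq_sum {w : ℕ → Bool → ℝ} :
    ∀ (d lo hi : ℕ), hi = lo + d → ∀ φ : Form,
    pW w lo hi φ = ∑ σ : Fin d → Bool,
      (if φ.eval (extA lo σ) (fun _ => false)
        then ∏ j : Fin d, w (lo + (j : ℕ)) (σ j) else 0) := by
  intro d
  induction d with
  | zero =>
      intro lo hi hd φ
      subst hd
      rw [pW_stop le_rfl]
      rw [Fintype.sum_subsingleton _ (fun i : Fin 0 => Fin.elim0 i)]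
      rw [extA_zero]
      simp
  | succ d ih =>
      intro lo hi hd φ
      have hlt : lo < hi := by omega
      rw [pW_step hlt, ih (lo+1) hi (by omega) (fsubst φ lo true),
        ih (lo+1) hi (by omega) (fsubst φ lo false)]
      rw [← Equiv.sum_comp (Fin.consEquiv (fun _ : Fin (d+1) => Bool))]
      rw [Fintype.sum_prod_type, Fintype.sum_bool]
      have key : ∀ (b : Bool) (σ' : Fin d → Bool),
          (if φ.eval (extA lo (Fin.cons b σ' : Fin (d+1) → Bool)) (fun _ => false)
            then ∏ j : Fin (d+1), w (lo + (j : ℕ)) ((Fin.cons b σ' : Fin (d+1) → Bool) j) else 0)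
          = w lo b *
            (if (fsubst φ lo b).eval (extA (lo+1) σ') (fun _ => false)
              then ∏ j : Fin d, w (lo + 1 + (j : ℕ)) (σ' j) else 0) := by
        intro b σ'
        have heval : (fsubst φ lo b).eval (extA (lo+1) σ') (fun _ => false)
            = φ.eval (extA lo (Fin.cons b σ' : Fin (d+1) → Bool)) (fun _ => false) := by
          rw [eval_fsubst, extA_cons]
        have hprod : ∏ j : Fin (d+1), w (lo + (j : ℕ)) ((Fin.cons b σ' : Fin (d+1) → Bool) j)
            = w lo b * ∏ j : Fin d, w (lo + 1 + (j : ℕ)) (σ' j) := by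
          rw [Fin.prod_univ_succ]
          simp only [Fin.cons_zero, Fin.val_zero, add_zero, Fin.cons_succ, Fin.val_succ]
          congr 1
          apply Finset.prod_congr rfl
          intro j _
          congr 1
          omega
        rw [heval, hprod, mul_ite, mul_zero]
      rw [Finset.mul_sum, Finset.mul_sum]
      congr 1
      · refine Finset.sum_congr rfl (fun σ' _ => ?_)
        have := key true σ'
        simp only [Fin.consEquiv_apply] at *
        exact this.symm
      · refine Finset.sum_congr rfl (fun σ' _ => ?_)
        have := key false σ'
        simp only [Fin.consEquiv_apply] at *
        exact this.symm

lemma WMC_eq_pW (n : ℕ) (φ : Form) (w : ℕ → Bool → ℝ) :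
    WMC n φ w = pW w 0 n φ := by
  rw [pW_eq_sum n 0 n (by omega) φ, WMC]
  apply Finset.sum_congr rfl
  intro σ _
  have harg : (fun i : ℕ => if h : i < n then σ ⟨i, h⟩ else false) = extA 0 σ := by
    funext i
    by_cases hi : i < n
    · rw [dif_pos hi, extA, dif_pos ⟨Nat.zero_le i, by omega⟩]
      rfl
    · rw [dif_neg hi, extA, dif_neg (by omega)]
  rw [harg]
  congr 1
  apply Finset.prod_congr rfl
  intro j _
  congr 1
  omega

end DiceAux

/-- **Boolean Expression Correctness.**  If a Boolean Dice expression `e` with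
free variables among `x1, …, xn` compiles as `e ⤳ (φ, γ, w)`, then for any
Boolean values `v1, …, vn` (given by the environment `ρ`):
(1) the accepting semantics satisfies `⟦e[xi ↦ vi]⟧_A = WMC(γ[xi ↦ vi], w)`;
(2) for any Boolean value `v`, the distributional semantics satisfies
`⟦e[xi ↦ vi]⟧_D(v) = WMC(((φ ⇔ v) ∧ γ)[xi ↦ vi], w) / WMC(γ[xi ↦ vi], w)`,
where a quotient with zero denominator is defined to be `0`. -/
theorem boolean_expression_correctness
    (e : BExp) (n : ℕ) (φ γ : Form) (w : ℕ → Bool → ℝ)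
    (h : Comp e 0 n φ γ w) (ρ : String → Bool) :
    (e.substEnv (fun x => some (ρ x))).semA = WMC n (γ.substProg ρ) w
    ∧ ∀ v : Bool,
        (e.substEnv (fun x => some (ρ x))).semD v
          = WMC n (((φ.iff (Form.ofBool v)).and γ).substProg ρ) w
            / WMC n (γ.substProg ρ) w := by
  have hsem := DiceAux.main h ρ
  have hA : (e.substEnv (fun x => some (ρ x))).semA
      = DiceAux.pW w 0 n (γ.substProg ρ) := by
    rw [BExp.semA, Fintype.sum_bool, hsem true, hsem false,
      ← DiceAux.pW_or_disjoint 0 _ _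
        (fun σ => by
          simp only [Form.eval, DiceAux.eval_substProg, DiceAux.eval_ofBool]
          cases hb : Form.eval σ ρ φ <;> simp [hb])]
    exact DiceAux.pW_congr 0 _ _ (fun σ => by
      simp only [Form.eval, DiceAux.eval_substProg, DiceAux.eval_ofBool]
      cases hb : Form.eval σ ρ φ <;> cases hg : Form.eval σ ρ γ <;> simp [hb, hg])
  refine ⟨by rw [hA, DiceAux.WMC_eq_pW], fun v => ?_⟩
  rw [BExp.semD, hA, hsem v, DiceAux.WMC_eq_pW, DiceAux.WMC_eq_pW]
end
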